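/- arXiv:2008.04994 — 3 statements merged into one kernel-verified Lean document; each statement's English description precedes it below -/
import Mathlib

section
/- There exists a set X ⊆ ω₁^ω such that for every tree T ⊆ ω₁^{<ω} with the property that every node of T extending the stem has exactly ω-many immediate successors in T, the set of branches [T] intersects both X and its complement, provided ω₁ ≤ 2^ω. -/
/-- `T ⊆ κ^{<ω}` is a tree: closed under taking prefixes. -/
def IsSeqTree {κ : Type*} (T : Set (List κ)) : Prop :=
  ∀ s ∈ T, ∀ t : List κ, t <+: s → t ∈ T

/-- `T ∈ 𝕃(ω₁,ω)`: a tree in `κ^{<ω}` (`κ` of size `ω₁`) with a stem (a node comparable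
with all nodes of `T`) such that every node extending the stem has countably infinitely
many immediate successors in `T`. -/
def LaverOmega {κ : Type*} (T : Set (List κ)) : Prop :=
  IsSeqTree T ∧ T.Nonempty ∧
    ∃ st ∈ T, (∀ s ∈ T, st <+: s ∨ s <+: st) ∧
      ∀ t ∈ T, st <+: t →
        {α : κ | t ++ [α] ∈ T}.Countable ∧ {α : κ | t ++ [α] ∈ T}.Infinite

/-- The set of branches of a tree `T ⊆ κ^{<ω}`. -/
def seqBranches {κ : Type*} (T : Set (List κ)) : Set (ℕ → κ) :=
  {x | ∀ n : ℕ, List.ofFn (fun i : Fin n => x i) ∈ T}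

open Cardinal Set

universe u

theorem bernstein_aux {β ι : Type u} (S : ι → Set β)
    (h1 : ∀ i, #ι ≤ #(S i)) (h2 : ∀ i, ℵ₀ ≤ #(S i)) :
    ∃ X : Set β, ∀ i, (S i ∩ X).Nonempty ∧ (S i \ X).Nonempty := by
  obtain ⟨r, wo, hr⟩ := Cardinal.ord_eq ι
  have hseg : ∀ i : ι, #{j // r j i} < #(S i) := by
    intro i
    refine lt_of_lt_of_le ?_ (h1 i)
    rw [← Ordinal.card_typein, ← Cardinal.lt_ord, hr]
    exact Ordinal.typein_lt_type r i
  have step : ∀ (i : ι) (g : ∀ j, r j i → β × β), ∃ p : β × β,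
      p.1 ∈ S i ∧ p.2 ∈ S i ∧ p.1 ≠ p.2 ∧ ∀ j (h : r j i),
        p.1 ≠ (g j h).1 ∧ p.1 ≠ (g j h).2 ∧ p.2 ≠ (g j h).1 ∧ p.2 ≠ (g j h).2 := by
    intro i g
    set B : Set β := (Set.range fun j : {j // r j i} => (g j.1 j.2).1) ∪
        (Set.range fun j : {j // r j i} => (g j.1 j.2).2) with hB
    have hBcard : #B < #(S i) := by
      refine lt_of_le_of_lt (Cardinal.mk_union_le _ _) ?_
      exact Cardinal.add_lt_of_lt (h2 i)
        (lt_of_le_of_lt Cardinal.mk_range_le (hseg i))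
        (lt_of_le_of_lt Cardinal.mk_range_le (hseg i))
    have ha : (S i \ B).Nonempty := by
      rw [Set.nonempty_iff_ne_empty]
      intro h
      have : S i ⊆ B := by rwa [Set.diff_eq_empty] at h
      exact absurd (Cardinal.mk_le_mk_of_subset this) (not_le.2 hBcard)
    obtain ⟨a, haS, haB⟩ := ha
    have hb : (S i \ insert a B).Nonempty := by
      rw [Set.nonempty_iff_ne_empty]
      intro h
      have hsub : S i ⊆ insert a B := by rwa [Set.diff_eq_empty] at h
      have : #(insert a B : Set β) < #(S i) := by
        refine lt_of_le_of_lt (Cardinal.mk_insert_le) ?_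
        exact Cardinal.add_lt_of_lt (h2 i) hBcard
          (lt_of_lt_of_le Cardinal.one_lt_aleph0 (h2 i))
      exact absurd (Cardinal.mk_le_mk_of_subset hsub) (not_le.2 this)
    obtain ⟨b, hbS, hbB⟩ := hb
    refine ⟨(a, b), haS, hbS, ?_, ?_⟩
    · dsimp only
      intro h; exact hbB (Set.mem_insert_iff.2 (Or.inl h.symm))
    · dsimp only
      intro j h
      have h1a : (g j h).1 ∈ B := Or.inl ⟨⟨j, h⟩, rfl⟩
      have h2a : (g j h).2 ∈ B := Or.inr ⟨⟨j, h⟩, rfl⟩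
      have hbB' : b ∉ B := fun hh => hbB (Set.mem_insert_of_mem _ hh)
      refine ⟨fun h' => haB ?_, fun h' => haB ?_, fun h' => hbB' ?_, fun h' => hbB' ?_⟩
      · rw [h']; exact h1a
      · rw [h']; exact h2a
      · rw [h']; exact h1a
      · rw [h']; exact h2a
  have wf : WellFounded r := wo.wf
  let f : ι → β × β := wf.fix (fun i g => Classical.choose (step i g))
  have hf : ∀ i, f i = Classical.choose (step i (fun j _ => f j)) := by
    intro i
    exact wf.fix_eq _ i
  have hprop : ∀ i, (f i).1 ∈ S i ∧ (f i).2 ∈ S i ∧ (f i).1 ≠ (f i).2 ∧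
      ∀ j (h : r j i), (f i).1 ≠ (f j).1 ∧ (f i).1 ≠ (f j).2 ∧
        (f i).2 ≠ (f j).1 ∧ (f i).2 ≠ (f j).2 := by
    intro i
    rw [hf i]
    exact Classical.choose_spec (step i (fun j _ => f j))
  refine ⟨Set.range fun i => (f i).1, fun i => ⟨⟨(f i).1, (hprop i).1, ⟨i, rfl⟩⟩, ⟨(f i).2, (hprop i).2.1, ?_⟩⟩⟩
  rintro ⟨j, hj⟩
  dsimp only at hj
  rcases trichotomous_of r j i with h | rfl | h
  · exact ((hprop i).2.2.2 j h).2.2.1 hj.symm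
  · exact (hprop j).2.2.1 hj
  · exact ((hprop j).2.2.2 i h).2.1 hj


theorem laver_countable {κ : Type*} {T : Set (List κ)} (h : LaverOmega T) : T.Countable := by
  obtain ⟨htree, hne, st, hstT, hcomp, hsucc⟩ := h
  have key : ∀ n : ℕ, {t | t ∈ T ∧ st <+: t ∧ t.length = st.length + n}.Countable := by
    intro n
    induction n with
    | zero =>
      refine Set.Countable.mono ?_ (Set.countable_singleton st)
      rintro t ⟨-, hpre, hlen⟩
      exact (hpre.eq_of_length (by omega)).symm
    | succ n ih =>
      have hsub : {t | t ∈ T ∧ st <+: t ∧ t.length = st.length + (n + 1)} ⊆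
          ⋃ t ∈ {t | t ∈ T ∧ st <+: t ∧ t.length = st.length + n},
            (fun α => t ++ [α]) '' {α | t ++ [α] ∈ T} := by
        rintro s ⟨hsT, hpre, hlen⟩
        have hne' : s ≠ [] := by intro h; simp [h] at hlen
        have hts : s.dropLast ++ [s.getLast hne'] = s := List.dropLast_append_getLast hne'
        have htlen : s.dropLast.length = st.length + n := by
          rw [List.length_dropLast]; omega
        have htT : s.dropLast ∈ T := htree s hsT _ (List.dropLast_prefix s)
        have hstt : st <+: s.dropLast :=
          List.prefix_of_prefix_length_le hpre (List.dropLast_prefix s) (by omega)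
        refine Set.mem_biUnion ⟨htT, hstt, htlen⟩ ⟨s.getLast hne', ?_, hts⟩
        show s.dropLast ++ [s.getLast hne'] ∈ T
        rw [hts]; exact hsT
      refine Set.Countable.mono hsub (Set.Countable.biUnion ih ?_)
      rintro t ⟨htT, hstt, -⟩
      exact ((hsucc t htT hstt).1).image _
  have hsub : T ⊆ (Set.range fun n : ℕ => st.take n) ∪
      ⋃ n : ℕ, {t | t ∈ T ∧ st <+: t ∧ t.length = st.length + n} := by
    intro t ht
    rcases hcomp t ht with hst | hts
    · right
      refine Set.mem_iUnion.2 ⟨t.length - st.length, ht, hst, ?_⟩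
      have := hst.length_le; omega
    · left
      exact ⟨t.length, (List.prefix_iff_eq_take.1 hts).symm⟩
  exact Set.Countable.mono hsub ((Set.countable_range _).union (Set.countable_iUnion key))


theorem laver_branches {κ : Type u} (hne : Nonempty κ) {T : Set (List κ)}
    (h : LaverOmega T) : (2 : Cardinal.{u}) ^ (ℵ₀ : Cardinal.{u}) ≤ #(seqBranches T) := by
  classical
  obtain ⟨htree, hTne, st, hstT, hcomp, hsucc⟩ := h
  have d : κ := hne.some
  -- choose two distinct successors at each relevant node
  have hP : ∀ t : List κ, ∃ p : Bool → κ,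
      (t ∈ T ∧ st <+: t) → ((∀ b : Bool, t ++ [p b] ∈ T) ∧ p false ≠ p true) := by
    intro t
    by_cases hc : t ∈ T ∧ st <+: t
    · obtain ⟨a, ha, b, hb, hab⟩ := ((hsucc t hc.1 hc.2).2).nontrivial
      refine ⟨fun x => if x then b else a, fun _ => ⟨fun x => ?_, by simpa using hab⟩⟩
      cases x <;> simpa
    · exact ⟨fun _ => d, fun hcc => absurd hcc hc⟩
  choose P hPspec using hP
  -- the finite approximations
  let u : (ℕ → Bool) → ℕ → List κ := fun g n =>
    Nat.rec st (fun m prev => prev ++ [P prev (g m)]) n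
  have hu0 : ∀ g, u g 0 = st := fun _ => rfl
  have husucc : ∀ g n, u g (n + 1) = u g n ++ [P (u g n) (g n)] := fun _ _ => rfl
  have hmemT : ∀ g n, u g n ∈ T ∧ st <+: u g n ∧ (u g n).length = st.length + n := by
    intro g n
    induction n with
    | zero => exact ⟨hstT, List.prefix_rfl, by rw [hu0]; omega⟩
    | succ n ih =>
      have hs := (hPspec (u g n) ⟨ih.1, ih.2.1⟩).1 (g n)
      refine ⟨hs, ih.2.1.trans ⟨[P (u g n) (g n)], rfl⟩, ?_⟩
      rw [husucc, List.length_append, ih.2.2]; simp; omega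
  have humono : ∀ g {m n : ℕ}, m ≤ n → u g m <+: u g n := by
    intro g m n hmn
    induction hmn with
    | refl => exact List.prefix_rfl
    | step h ih => exact ih.trans ⟨[_], rfl⟩
  -- the branches
  let x : (ℕ → Bool) → ℕ → κ := fun g n => (u g (n + 1)).getD n d
  have hget : ∀ g (k m : ℕ), k < st.length + m → (u g m).getD k d = x g k := by
    intro g k m hk
    rcases le_total m (k + 1) with hm | hm
    · obtain ⟨t, ht⟩ := humono g hm
      show (u g m).getD k d = (u g (k+1)).getD k d
      rw [← ht, List.getD_append]
      rw [(hmemT g m).2.2]; exact hk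
    · obtain ⟨t, ht⟩ := humono g hm
      show (u g m).getD k d = (u g (k+1)).getD k d
      rw [← ht, List.getD_append]
      rw [(hmemT g (k+1)).2.2]; omega
  have hofFn : ∀ g n, List.ofFn (fun i : Fin n => x g i) = (u g n).take n := by
    intro g n
    induction n with
    | zero => simp
    | succ n ih =>
      rw [List.ofFn_succ', List.concat_eq_append]
      have h1 : (List.ofFn fun i : Fin n => x g i.castSucc) = (u g n).take n := by
        rw [← ih]; rfl
      have hlast : x g (Fin.last n : Fin (n+1)) = x g n := rfl
      have hlen1 : n < (u g (n+1)).length := by rw [(hmemT g (n+1)).2.2]; omega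
      have hx : x g n = (u g (n+1))[n] := List.getD_eq_getElem _ _ hlen1
      have h2 : (u g (n+1)).take (n+1) = (u g (n+1)).take n ++ [x g n] := by
        rw [List.take_succ, List.getElem?_eq_getElem hlen1]
        simp [hx]
      have h3 : (u g (n+1)).take n = (u g n).take n := by
        obtain ⟨t, ht⟩ := humono g (Nat.le_succ n)
        rw [← ht, List.take_append_of_le_length]
        rw [(hmemT g n).2.2]; omega
      rw [h1, hlast, h2, h3]
  have hbranch : ∀ g, x g ∈ seqBranches T := by
    intro g n
    rw [hofFn]
    exact htree _ (hmemT g n).1 _ (List.take_prefix _ _)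
  have hinj : Function.Injective x := by
    intro g g' hxx
    by_contra hgg
    have hdiff : ∃ n, g n ≠ g' n := by
      by_contra hno
      push_neg at hno
      exact hgg (funext hno)
    set n := Nat.find hdiff with hn
    have hnd : g n ≠ g' n := Nat.find_spec hdiff
    have hueq : u g n = u g' n := by
      have : ∀ m, m ≤ n → u g m = u g' m := by
        intro m hm
        induction m with
        | zero => rfl
        | succ m ih =>
          have hgm : g m = g' m := not_not.1 (Nat.find_min hdiff (by omega))
          rw [husucc, husucc, ih (by omega), hgm]
      exact this n le_rfl
    have hxg : x g (st.length + n) = P (u g n) (g n) := by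
      rw [← hget g (st.length + n) (n+1) (by omega), husucc,
        List.getD_append_right _ _ _ _ (by rw [(hmemT g n).2.2])]
      simp [(hmemT g n).2.2]
    have hxg' : x g' (st.length + n) = P (u g n) (g' n) := by
      rw [← hget g' (st.length + n) (n+1) (by omega), husucc,
        List.getD_append_right _ _ _ _ (by rw [(hmemT g' n).2.2]), hueq]
      simp [(hmemT g' n).2.2, hueq]
    have hPne : P (u g n) false ≠ P (u g n) true :=
      (hPspec (u g n) ⟨(hmemT g n).1, (hmemT g n).2.1⟩).2
    have : P (u g n) (g n) = P (u g n) (g' n) := by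
      rw [← hxg, ← hxg', hxx]
    cases h1 : g n <;> cases h2 : g' n
    · exact hnd (by rw [h1, h2])
    · rw [h1, h2] at this; exact hPne this
    · rw [h1, h2] at this; exact hPne this.symm
    · exact hnd (by rw [h1, h2])
  -- conclude the cardinality bound
  let F : ULift.{u} (ℕ → Bool) → ↥(seqBranches T) := fun g => ⟨x g.down, hbranch _⟩
  have hFinj : Function.Injective F := by
    intro a b hab
    have : x a.down = x b.down := congrArg Subtype.val hab
    exact ULift.ext _ _ (hinj this)
  have hcard := Cardinal.mk_le_of_injective hFinj
  rw [Cardinal.mk_uLift] at hcard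
  have : Cardinal.mk (ℕ → Bool) = (2 : Cardinal.{0}) ^ (ℵ₀ : Cardinal.{0}) := by
    rw [Cardinal.mk_arrow]
    simp [Cardinal.mk_bool, Cardinal.mk_nat]
  rw [this, Cardinal.lift_two_power, Cardinal.lift_aleph0] at hcard
  exact hcard

theorem aleph_le_transfer (h : (Cardinal.aleph 1 : Cardinal.{v}) ≤ 2 ^ Cardinal.aleph0) :
    (Cardinal.aleph 1 : Cardinal.{u}) ≤ 2 ^ Cardinal.aleph0 := by
  rw [← Cardinal.lift_le.{v}]
  simpa using Cardinal.lift_le.{u}.2 h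

theorem laver_count {κ : Type u} (hκ : Cardinal.mk κ = Cardinal.aleph 1)
    (hle : (Cardinal.aleph 1 : Cardinal.{u}) ≤ 2 ^ Cardinal.aleph0) :
    Cardinal.mk {T : Set (List κ) // LaverOmega T} ≤ (2 : Cardinal.{u}) ^ (ℵ₀ : Cardinal.{u}) := by
  haveI : Infinite κ := Cardinal.infinite_iff.2 (by rw [hκ]; exact aleph0_le_aleph 1)
  have hch : ∀ T : {T : Set (List κ) // LaverOmega T}, ∃ f : ℕ → List κ, T.1 = Set.range f :=
    fun T => (laver_countable T.2).exists_eq_range T.2.2.1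
  choose e he using hch
  have hinj : Function.Injective e := by
    intro T₁ T₂ h12
    apply Subtype.ext
    rw [he T₁, he T₂, h12]
  have h1 := Cardinal.mk_le_of_injective hinj
  have h2 : Cardinal.mk (ℕ → List κ) = (Cardinal.aleph 1) ^ (ℵ₀ : Cardinal.{u}) := by
    rw [Cardinal.mk_arrow, Cardinal.lift_uzero, Cardinal.mk_list_eq_mk, hκ]
    simp [Cardinal.mk_nat]
  have h3 : (Cardinal.aleph 1) ^ (ℵ₀ : Cardinal.{u}) ≤ (2 : Cardinal.{u}) ^ (ℵ₀ : Cardinal.{u}) := by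
    calc (Cardinal.aleph 1) ^ (ℵ₀ : Cardinal.{u}) ≤ ((2 : Cardinal.{u}) ^ (ℵ₀ : Cardinal.{u})) ^ (ℵ₀ : Cardinal.{u}) :=
          Cardinal.power_le_power_right hle
      _ = (2 : Cardinal.{u}) ^ ((ℵ₀ : Cardinal.{u}) * ℵ₀) := (Cardinal.power_mul).symm
      _ = (2 : Cardinal.{u}) ^ (ℵ₀ : Cardinal.{u}) := by rw [Cardinal.aleph0_mul_aleph0]
  calc Cardinal.mk {T : Set (List κ) // LaverOmega T} ≤ Cardinal.mk (ℕ → List κ) := h1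
    _ = (Cardinal.aleph 1) ^ (ℵ₀ : Cardinal.{u}) := h2
    _ ≤ _ := h3


/-- If `ω₁ ≤ 2^ω` then there is a Bernstein-type set `X ⊆ ω₁^ω` meeting the
branch set of every `𝕃(ω₁,ω)`-tree as well as its complement. -/
theorem stmt2 {κ : Type*} (hκ : Cardinal.mk κ = Cardinal.aleph 1)
    (hle : Cardinal.aleph 1 ≤ 2 ^ Cardinal.aleph0) :
    ∃ X : Set (ℕ → κ), ∀ T : Set (List κ), LaverOmega T →
      (seqBranches T ∩ X).Nonempty ∧ (seqBranches T \ X).Nonempty := by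
  haveI : Infinite κ := Cardinal.infinite_iff.2 (by rw [hκ]; exact aleph0_le_aleph 1)
  have hbr : ∀ T : {T : Set (List κ) // LaverOmega T},
      (2 : Cardinal) ^ (ℵ₀ : Cardinal) ≤ #(seqBranches T.1) :=
    fun T => laver_branches ⟨Classical.arbitrary κ⟩ T.2
  obtain ⟨X, hX⟩ := bernstein_aux (fun T : {T : Set (List κ) // LaverOmega T} => seqBranches T.1)
    (fun T => le_trans (laver_count hκ (aleph_le_transfer hle)) (hbr T))
    (fun T => le_trans (Cardinal.cantor ℵ₀).le (hbr T))
  exact ⟨X, fun T hT => hX ⟨T, hT⟩⟩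
end

section
/- Let κ be regular uncountable, and let D ⊆ 2^{<κ} be open dense in κ-Cohen forcing (ordered by reverse extension). Then for every set H ⊆ 2^{<κ} of size < κ there exists τ ∈ 2^{<κ} such that for every s ∈ H, the concatenation s⌢τ belongs to D. -/
noncomputable section

/-- A node of `2^{<κ}`: a length `< o` with a function normalized beyond the length. -/
def BNode (o : Ordinal) :=
  {p : Ordinal × (Ordinal → Bool) // p.1 < o ∧ ∀ i, p.1 ≤ i → p.2 i = false}

namespace BNode

variable {o : Ordinal}

def len (a : BNode o) : Ordinal := a.1.1
def val (a : BNode o) : Ordinal → Bool := a.1.2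
def Pre (a b : BNode o) : Prop := a.len ≤ b.len ∧ ∀ i < a.len, a.val i = b.val i

end BNode

open BNode

/-- `D` is open dense in κ-Cohen forcing `(2^{<κ}, ⊇)`. -/
def CohenOpenDense {o : Ordinal} (D : Set (BNode o)) : Prop :=
  (∀ s : BNode o, ∃ t ∈ D, Pre s t) ∧ ∀ s ∈ D, ∀ t, Pre s t → t ∈ D

/-- `u = s⌢τ`: `u` is the concatenation of `s` and `τ`. -/
def IsConcat {o : Ordinal} (u s τ : BNode o) : Prop :=
  u.len = s.len + τ.len ∧ (∀ i < s.len, u.val i = s.val i) ∧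
    ∀ i < τ.len, u.val (s.len + i) = τ.val i

/- ### Auxiliary material -/

namespace BNode

theorem Pre.rfl {o : Ordinal} {a : BNode o} : Pre a a := ⟨le_rfl, fun _ _ => Eq.refl _⟩

theorem Pre.trans {o : Ordinal} {a b c : BNode o} (h1 : Pre a b) (h2 : Pre b c) :
    Pre a c :=
  ⟨h1.1.trans h2.1, fun i hi => (h1.2 i hi).trans (h2.2 i (hi.trans_le h1.1))⟩

end BNode

/-- Build a node from a length and an arbitrary valuation (normalizing beyond the length). -/
def mkNode {o : Ordinal} (l : Ordinal) (hl : l < o) (v : Ordinal → Bool) : BNode o :=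
  ⟨(l, fun i => if i < l then v i else false), hl,
    fun i hi => if_neg (not_lt.2 hi)⟩

@[simp] theorem mkNode_len {o : Ordinal} (l : Ordinal) (hl : l < o) (v : Ordinal → Bool) :
    (mkNode l hl v).len = l := rfl

theorem mkNode_val {o : Ordinal} {l : Ordinal} (hl : l < o) (v : Ordinal → Bool)
    {i : Ordinal} (hi : i < l) : (mkNode l hl v).val i = v i := if_pos hi

theorem ord_le_add_right (a b : Ordinal) : a ≤ a + b := by
  simpa using add_le_add_left (Ordinal.zero_le b) a

theorem add_lt_ord' {κ : Cardinal} (hκ : Cardinal.aleph0 ≤ κ) {a b : Ordinal}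
    (ha : a < κ.ord) (hb : b < κ.ord) : a + b < κ.ord := by
  rw [Cardinal.lt_ord] at *
  rw [Ordinal.card_add]
  exact Cardinal.add_lt_of_lt hκ ha hb

/-- The concatenation `s⌢τ` as a node. -/
def catNode {o : Ordinal} (s τ : BNode o) (h : s.len + τ.len < o) : BNode o :=
  mkNode (s.len + τ.len) h (fun i => if i < s.len then s.val i else τ.val (i - s.len))

theorem catNode_isConcat {o : Ordinal} (s τ : BNode o) (h : s.len + τ.len < o) :
    IsConcat (catNode s τ h) s τ := by
  refine ⟨rfl, fun i hi => ?_, fun i hi => ?_⟩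
  · rw [catNode, mkNode_val h _ (hi.trans_le (ord_le_add_right _ _)), if_pos hi]
  · rw [catNode, mkNode_val h _ (by exact (add_lt_add_iff_left _).2 hi),
      if_neg (not_lt.2 (ord_le_add_right _ _)), Ordinal.add_sub_cancel]

/-- The tail of `u` beyond length `l`. -/
def tailNode {o : Ordinal} (u : BNode o) (l : Ordinal) : BNode o :=
  mkNode (u.len - l) ((Ordinal.sub_le_self _ _).trans_lt u.2.1) (fun i => u.val (l + i))

/-- For any open dense `D` and any node `s`, the set of `τ` with `s⌢τ ∈ D` is open dense. -/
theorem concatSet_openDense {κ : Cardinal} (hκ : Cardinal.aleph0 ≤ κ)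
    {D : Set (BNode κ.ord)} (hD : CohenOpenDense D) (s : BNode κ.ord) :
    CohenOpenDense {τ | ∃ u ∈ D, IsConcat u s τ} := by
  constructor
  · intro τ
    have hlen : s.len + τ.len < κ.ord := add_lt_ord' hκ s.2.1 τ.2.1
    obtain ⟨u, huD, hpre⟩ := hD.1 (catNode s τ hlen)
    have hcc := catNode_isConcat s τ hlen
    have hsu : s.len ≤ u.len := (ord_le_add_right s.len τ.len).trans hpre.1
    have hτu : τ.len ≤ u.len - s.len := by
      have h1 : s.len + τ.len ≤ s.len + (u.len - s.len) := by
        rw [Ordinal.add_sub_cancel_of_le hsu]; exact hpre.1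
      exact (add_le_add_iff_left s.len).1 h1
    refine ⟨tailNode u s.len, ⟨u, huD, ?_, fun i hi => ?_, fun i hi => ?_⟩, ?_, fun i hi => ?_⟩
    · -- length equation
      simp [tailNode, Ordinal.add_sub_cancel_of_le hsu]
    · -- initial segment equals s
      rw [← hpre.2 i (hi.trans_le (ord_le_add_right _ _)), hcc.2.1 i hi]
    · -- tail values
      have hi' : i < u.len - s.len := hi
      rw [tailNode, mkNode_val _ _ hi']
    · -- Pre τ (tailNode u s.len) : lengths
      exact hτu
    · -- Pre τ (tailNode u s.len) : values
      rw [tailNode, mkNode_val _ _ (show i < u.len - s.len from hi.trans_le hτu),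
        ← hpre.2 (s.len + i) (by exact (add_lt_add_iff_left _).2 hi), hcc.2.2 i hi]
  · rintro τ ⟨u, huD, hcu⟩ τ' hpre
    have hlen : s.len + τ'.len < κ.ord := add_lt_ord' hκ s.2.1 τ'.2.1
    refine ⟨catNode s τ' hlen, hD.2 u huD _ ⟨?_, fun α hα => ?_⟩, catNode_isConcat s τ' hlen⟩
    · rw [hcu.1]
      exact ((add_le_add_iff_left _).2 hpre.1).trans (by rw [catNode, mkNode_len])
    · have hcc' := catNode_isConcat s τ' hlen
      rw [hcu.1] at hα
      rcases lt_or_ge α s.len with h | h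
      · rw [hcu.2.1 α h, hcc'.2.1 α h]
      · have hform : s.len + (α - s.len) = α := Ordinal.add_sub_cancel_of_le h
        have hi : α - s.len < τ.len := by
          rw [← hform] at hα
          exact (add_lt_add_iff_left s.len).1 hα
        rw [← hform, hcu.2.2 _ hi, hcc'.2.2 _ (hi.trans_le hpre.1), hpre.2 _ hi]

open Classical in
/-- The "union" of a family of nodes indexed by `j < i` (with junk fallback). -/
def unionNode {κ : Cardinal.{0}} (h0 : (0 : Ordinal) < κ.ord) (i : Ordinal.{0})
    (f : ∀ j < i, BNode κ.ord) : BNode κ.ord :=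
  if h : Ordinal.bsup i (fun j hj => (f j hj).len) < κ.ord then
    mkNode _ h (fun α =>
      if h2 : ∃ j, ∃ hj : j < i, α < (f j hj).len
      then (f h2.choose h2.choose_spec.choose).val α else false)
  else mkNode 0 h0 (fun _ => false)

theorem pre_unionNode {κ : Cardinal.{0}} (h0 : (0 : Ordinal) < κ.ord) (i : Ordinal.{0})
    (f : ∀ j < i, BNode κ.ord)
    (hchain : ∀ j (hj : j < i), ∀ j' (hj' : j' < i), j ≤ j' → Pre (f j hj) (f j' hj'))
    (hlt : Ordinal.bsup i (fun j hj => (f j hj).len) < κ.ord) :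
    ∀ j (hj : j < i), Pre (f j hj) (unionNode h0 i f) := by
  intro j hj
  rw [unionNode, dif_pos hlt]
  refine ⟨Ordinal.le_bsup _ j hj, fun α hα => ?_⟩
  have hαb : α < Ordinal.bsup i (fun j hj => (f j hj).len) :=
    hα.trans_le (Ordinal.le_bsup _ j hj)
  rw [mkNode_val hlt _ hαb]
  have h2 : ∃ j', ∃ hj' : j' < i, α < (f j' hj').len := ⟨j, hj, hα⟩
  rw [dif_pos h2]
  have hj' : h2.choose < i := h2.choose_spec.choose
  have hα' : α < (f h2.choose hj').len := h2.choose_spec.choose_spec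
  rcases le_total j h2.choose with hle | hle
  · exact (hchain j hj h2.choose hj' hle).2 α hα
  · exact ((hchain h2.choose hj' j hj hle).2 α hα').symm

section Rec

variable {κ : Cardinal.{0}}

/-- The recursively-built increasing sequence of conditions: at stage `i`, extend the
union of all previous stages into `A i`. -/
def gseq (h0 : (0 : Ordinal) < κ.ord) (A : Ordinal → Set (BNode κ.ord))
    (hA : ∀ i, CohenOpenDense (A i)) (i : Ordinal) : BNode κ.ord :=
  Classical.choose ((hA i).1 (unionNode h0 i (fun j _ => gseq h0 A hA j)))
termination_by i

theorem gseq_spec (h0 : (0 : Ordinal) < κ.ord) (A : Ordinal → Set (BNode κ.ord))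
    (hA : ∀ i, CohenOpenDense (A i)) (i : Ordinal) :
    gseq h0 A hA i ∈ A i ∧
      Pre (unionNode h0 i (fun j _ => gseq h0 A hA j)) (gseq h0 A hA i) := by
  rw [gseq]
  exact Classical.choose_spec ((hA i).1 (unionNode h0 i (fun j _ => gseq h0 A hA j)))

theorem gseq_chain (h0 : (0 : Ordinal) < κ.ord) (A : Ordinal → Set (BNode κ.ord))
    (hA : ∀ i, CohenOpenDense (A i)) (hreg : κ.IsRegular) :
    ∀ i : Ordinal, i.card < κ →
      ∀ j, ∀ hj : j < i, Pre (gseq h0 A hA j) (unionNode h0 i (fun j _ => gseq h0 A hA j)) := by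
  intro i
  induction i using Ordinal.induction with
  | h i IH =>
    intro hcard j hj
    have hbsup : Ordinal.bsup i (fun j (_ : j < i) => (gseq h0 A hA j).len) < κ.ord :=
      Ordinal.bsup_lt_ord (by rwa [hreg.cof_eq]) (fun j _ => (gseq h0 A hA j).2.1)
    have hchain : ∀ j (hj : j < i), ∀ j' (hj' : j' < i), j ≤ j' →
        Pre (gseq h0 A hA j) (gseq h0 A hA j') := by
      intro a ha b hb hab
      rcases eq_or_lt_of_le hab with rfl | hlt
      · exact Pre.rfl
      · exact Pre.trans
          (IH b hb ((Ordinal.card_le_card hb.le).trans_lt hcard) a hlt)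
          (gseq_spec h0 A hA b).2
    exact pre_unionNode h0 i _ hchain hbsup j hj

/-- A condition meeting `< κ` many open dense sets simultaneously. -/
theorem exists_common (h0 : (0 : Ordinal) < κ.ord) (A : Ordinal → Set (BNode κ.ord))
    (hA : ∀ i, CohenOpenDense (A i)) (hreg : κ.IsRegular) (μ : Ordinal) (hμ : μ.card < κ) :
    ∃ τ : BNode κ.ord, ∀ i < μ, τ ∈ A i := by
  refine ⟨unionNode h0 μ (fun j _ => gseq h0 A hA j), fun i hi => ?_⟩
  exact (hA i).2 _ (gseq_spec h0 A hA i).1 _ (gseq_chain h0 A hA hreg μ hμ i hi)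

end Rec

/-- For `κ` regular uncountable and `D ⊆ 2^{<κ}` open dense in κ-Cohen
forcing, for every `H ⊆ 2^{<κ}` of size `< κ` there is a `τ ∈ 2^{<κ}` such that
`s⌢τ ∈ D` for every `s ∈ H`. -/
theorem stmt12 (κ : Cardinal.{0}) (hreg : κ.IsRegular) (hunc : Cardinal.aleph0 < κ)
    (D : Set (BNode κ.ord)) (hD : CohenOpenDense D)
    (H : Set (BNode κ.ord)) (hH : Cardinal.mk H < Cardinal.lift.{1} κ) :
    ∃ τ : BNode κ.ord, ∀ s ∈ H, ∃ u ∈ D, IsConcat u s τ := by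
  have h0 : (0 : Ordinal) < κ.ord := by
    rw [Cardinal.lt_ord, Ordinal.card_zero]
    exact hreg.pos
  obtain ⟨c, hc, hceq⟩ := Cardinal.lt_lift_iff.1 hH
  have hmk : Cardinal.mk (ULift.{1} c.ord.ToType) = Cardinal.mk H := by
    rw [Cardinal.mk_uLift, Cardinal.mk_toType, Cardinal.card_ord, hceq]
  obtain ⟨e⟩ := Cardinal.eq.1 hmk
  haveI : IsWellOrder c.ord.ToType (· < ·) := isWellOrder_lt
  -- the enumeration of `H`
  let σ : ∀ i, i < c.ord → BNode κ.ord := fun i hi =>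
    (e ⟨Ordinal.enum (α := c.ord.ToType) (· < ·)
      ⟨i, by rwa [Ordinal.type_toType]⟩⟩ : H)
  let A : Ordinal → Set (BNode κ.ord) := fun i =>
    if h : i < c.ord then {τ | ∃ u ∈ D, IsConcat u (σ i h) τ} else Set.univ
  have hA : ∀ i, CohenOpenDense (A i) := by
    intro i
    by_cases h : i < c.ord
    · simpa [A, dif_pos h] using concatSet_openDense hreg.aleph0_le hD (σ i h)
    · simp only [A, dif_neg h]
      exact ⟨fun s => ⟨s, Set.mem_univ s, Pre.rfl⟩, fun _ _ _ _ => Set.mem_univ _⟩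
  obtain ⟨τ, hτ⟩ := exists_common h0 A hA hreg c.ord (by rwa [Cardinal.card_ord])
  refine ⟨τ, fun s hs => ?_⟩
  -- locate `s` in the enumeration
  set x := e.symm ⟨s, hs⟩ with hx
  have hi : Ordinal.typein (α := c.ord.ToType) (· < ·) x.down < c.ord := by
    have := Ordinal.typein_lt_type (α := c.ord.ToType) (· < ·) x.down
    rwa [Ordinal.type_toType] at this
  have hmem := hτ _ hi
  have hσ : σ _ hi = s := by
    show ((e ⟨Ordinal.enum (α := c.ord.ToType) (· < ·) ⟨_, _⟩⟩ : H) : BNode κ.ord) = s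
    have : Ordinal.enum (α := c.ord.ToType) (· < ·)
        ⟨Ordinal.typein (α := c.ord.ToType) (· < ·) x.down, by rwa [Ordinal.type_toType]⟩
        = x.down := by
      have h' := Ordinal.enum_typein (α := c.ord.ToType) (· < ·) x.down
      convert h' using 2
    rw [this]
    have : (⟨x.down⟩ : ULift.{1} c.ord.ToType) = x := rfl
    rw [this, hx, Equiv.apply_symm_apply]
  simp only [A, dif_pos hi] at hmem
  rw [hσ] at hmem
  exact hmem
end
end

section
/- Let κ be regular uncountable and S ⊆ κ stationary and co-stationary. For the club κ-Mathias forcing ℝ_κ^Club (pairs (s,A) with s ∈ [κ]^{<κ}, A ⊆ κ club, sup s < min A), and for any condition (s,A) and any target t ∈ 2^{<κ}, there exists (s′,A′) ≤ (s,A) such that the sequence c defined by c(i) = 0 iff the (i+1)-st element of the generic set lies in S, restricted to the indices decided by (s′,A′) beyond those decided by (s,A), equals t. -/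
noncomputable section

/-- A pattern `t ∈ 2^{<κ}`. -/
def PNode (o : Ordinal) :=
  {p : Ordinal × (Ordinal → Bool) // p.1 < o ∧ ∀ i, p.1 ≤ i → p.2 i = false}

def PNode.len {o : Ordinal} (a : PNode o) : Ordinal := a.1.1
def PNode.val {o : Ordinal} (a : PNode o) : Ordinal → Bool := a.1.2

/-- `C` is a closed unbounded subset of (the ordinals below) `o`. -/
def IsClubIn (C : Set Ordinal) (o : Ordinal) : Prop :=
  C ⊆ Set.Iio o ∧ (∀ a < o, ∃ b ∈ C, a < b) ∧
    ∀ a < o, (C ∩ Set.Iio a).Nonempty → sSup (C ∩ Set.Iio a) = a → a ∈ C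

/-- `S` is stationary in `o`. -/
def IsStationaryIn (S : Set Ordinal) (o : Ordinal) : Prop :=
  S ⊆ Set.Iio o ∧ ∀ C, IsClubIn C o → (S ∩ C).Nonempty

/-- A condition `(s,A)` of club κ-Mathias forcing: `s ∈ [κ]^{<κ}`, `A ⊆ κ` club and
`sup s < min A`. -/
def IsMCond (κ : Cardinal.{0}) (s A : Set Ordinal) : Prop :=
  s ⊆ Set.Iio κ.ord ∧ Cardinal.mk s < Cardinal.lift.{1} κ ∧ IsClubIn A κ.ord ∧
    ∀ a ∈ s, ∀ b ∈ A, a < b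

/-- The club κ-Mathias order: `(t,B) ≤ (s,A)` iff `t` end-extends `s`, `B ⊆ A` and
`t \ s ⊆ A`. -/
def MathiasLE (t B s A : Set Ordinal) : Prop :=
  s ⊆ t ∧ (∀ a ∈ t, a ∉ s → ∀ b ∈ s, b < a) ∧ B ⊆ A ∧ (t \ s) ⊆ A

/-- `e` enumerates the set `s` increasingly, with order type `δ`. -/
def Enumerates (e : Ordinal → Ordinal) (δ : Ordinal) (s : Set Ordinal) : Prop :=
  (∀ i < δ, e i ∈ s) ∧ (∀ a ∈ s, ∃ i < δ, e i = a) ∧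
    ∀ i j : Ordinal, i < j → j < δ → e i < e j

lemma club_inter_Ioi {A : Set Ordinal} {o β : Ordinal} (hA : IsClubIn A o) (hβ : β < o) :
    IsClubIn (A ∩ Set.Ioi β) o := by
  obtain ⟨h1, h2, h3⟩ := hA
  refine ⟨fun x hx => h1 hx.1, ?_, ?_⟩
  · intro a ha
    obtain ⟨b, hb, hab⟩ := h2 (max a β) (max_lt ha hβ)
    exact ⟨b, ⟨hb, lt_of_le_of_lt (le_max_right a β) hab⟩, lt_of_le_of_lt (le_max_left a β) hab⟩
  · intro a ha hne hsup
    obtain ⟨x, hx⟩ := hne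
    have hsub : A ∩ Set.Ioi β ∩ Set.Iio a ⊆ A ∩ Set.Iio a := fun y hy => ⟨hy.1.1, hy.2⟩
    have h4 : sSup (A ∩ Set.Iio a) = a := by
      apply le_antisymm
      · exact csSup_le ⟨x, hsub hx⟩ (fun y hy => le_of_lt hy.2)
      · calc a = sSup (A ∩ Set.Ioi β ∩ Set.Iio a) := hsup.symm
          _ ≤ sSup (A ∩ Set.Iio a) :=
            csSup_le_csSup ⟨a, fun y hy => le_of_lt hy.2⟩ ⟨x, hx⟩ hsub
    exact ⟨h3 a ha ⟨x, hsub hx⟩ h4, Set.mem_Ioi.2 (lt_trans hx.1.2 hx.2)⟩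

lemma exists_in_club {A S : Set Ordinal} {o β : Ordinal}
    (hA : IsClubIn A o) (hS : IsStationaryIn S o)
    (hSco : IsStationaryIn (Set.Iio o \ S) o) (hβ : β < o) (b : Bool) :
    ∃ x, x ∈ A ∧ β < x ∧ (x ∈ S ↔ b = false) := by
  have hC := club_inter_Ioi hA hβ
  cases b with
  | false =>
    obtain ⟨x, hxS, hxA, hxβ⟩ := hS.2 _ hC
    exact ⟨x, hxA, hxβ, by simp [hxS]⟩
  | true =>
    obtain ⟨x, hxS, hxA, hxβ⟩ := hSco.2 _ hC
    exact ⟨x, hxA, hxβ, by simp [hxS.2]⟩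

noncomputable def seqAux (A S : Set Ordinal) (f : Ordinal → Bool) : Ordinal → Ordinal :=
  Ordinal.lt_wf.fix fun j rec =>
    Classical.epsilon fun x => x ∈ A ∧ (∀ i, ∀ _ : i < j, rec i ‹_› < x) ∧ (x ∈ S ↔ f j = false)

lemma seqAux_def (A S : Set Ordinal) (f : Ordinal → Bool) (j : Ordinal) :
    seqAux A S f j = Classical.epsilon
      (fun x => x ∈ A ∧ (∀ i < j, seqAux A S f i < x) ∧ (x ∈ S ↔ f j = false)) :=
  Ordinal.lt_wf.fix_eq _ j

lemma seqAux_spec {κ : Cardinal} (hreg : κ.IsRegular) {A S : Set Ordinal}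
    (hA : IsClubIn A κ.ord) (hS : IsStationaryIn S κ.ord)
    (hSco : IsStationaryIn (Set.Iio κ.ord \ S) κ.ord) (f : Ordinal → Bool) :
    ∀ j < κ.ord, seqAux A S f j ∈ A ∧ (∀ i < j, seqAux A S f i < seqAux A S f j) ∧
      (seqAux A S f j ∈ S ↔ f j = false) := by
  intro j
  induction j using Ordinal.induction with
  | _ j IH =>
    intro hj
    set g : j.ToType → Ordinal := fun k => seqAux A S f ((Ordinal.ToType.mk (o := j)).symm k)
      with hg
    have hglt : ∀ k, g k < κ.ord := fun k => by
      have h := ((Ordinal.ToType.mk (o := j)).symm k).2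
      exact hA.1 ((IH _ h (lt_trans h hj)).1)
    have hβ : iSup g < κ.ord :=
      Cardinal.iSup_lt_ord_of_isRegular hreg
        (by rw [Cardinal.mk_toType j]; exact Cardinal.lt_ord.mp hj) hglt
    have hex : ∃ x, x ∈ A ∧ (∀ i < j, seqAux A S f i < x) ∧ (x ∈ S ↔ f j = false) := by
      obtain ⟨x, hxA, hxβ, hxS⟩ := exists_in_club hA hS hSco hβ (f j)
      refine ⟨x, hxA, fun i hi => ?_, hxS⟩
      have hle : seqAux A S f i ≤ iSup g := by
        have h2 := Ordinal.le_iSup g ((Ordinal.ToType.mk (o := j)) ⟨i, hi⟩)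
        simpa [hg] using h2
      exact lt_of_le_of_lt hle hxβ
    rw [seqAux_def]
    exact Classical.epsilon_spec hex

/-- Let `κ` be regular uncountable and `S ⊆ κ` stationary and
co-stationary. For every club κ-Mathias condition `(s,A)` and every target pattern
`t ∈ 2^{<κ}` there is a condition `(s',A') ≤ (s,A)` such that the generic-set
enumeration decided by `(s',A')` realizes, beyond the part decided by `(s,A)`, exactly
the pattern `t` for the Cohen sequence `c` (`c(i) = 0` iff the `(i+1)`-st element of
the generic lies in `S`). -/
theorem stmt17 (κ : Cardinal.{0}) (hreg : κ.IsRegular) (hunc : Cardinal.aleph0 < κ)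
    (S : Set Ordinal) (hS : IsStationaryIn S κ.ord)
    (hSco : IsStationaryIn (Set.Iio κ.ord \ S) κ.ord)
    (s A : Set Ordinal) (hsA : IsMCond κ s A)
    (e0 : Ordinal → Ordinal) (d0 : Ordinal) (he0 : Enumerates e0 d0 s)
    (t : PNode κ.ord) :
    ∃ s' A' : Set Ordinal, IsMCond κ s' A' ∧ MathiasLE s' A' s A ∧
      ∃ e : Ordinal → Ordinal, Enumerates e (d0 + t.len) s' ∧
        (∀ i < d0, e i = e0 i) ∧
        ∀ j < t.len, (t.val j = false ↔ e (d0 + j) ∈ S) := by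
  obtain ⟨hsub, hcard, hclub, hlt⟩ := hsA
  have hlen : t.len < κ.ord := t.2.1
  set f : Ordinal → Bool := t.val with hf
  set α : Ordinal → Ordinal := seqAux A S f with hα
  have spec := seqAux_spec hreg hclub hS hSco f
  -- bound on the new elements
  set g : t.len.ToType → Ordinal := fun k => α ((Ordinal.ToType.mk (o := t.len)).symm k) with hg
  have hglt : ∀ k, g k < κ.ord := fun k => by
    have h := ((Ordinal.ToType.mk (o := t.len)).symm k).2
    exact hclub.1 ((spec _ (lt_trans h hlen)).1)
  have hβ : iSup g < κ.ord :=
    Cardinal.iSup_lt_ord_of_isRegular hreg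
      (by rw [Cardinal.mk_toType t.len]; exact Cardinal.lt_ord.mp hlen) hglt
  have hαβ : ∀ j < t.len, α j ≤ iSup g := by
    intro j hj
    have h2 := Ordinal.le_iSup g ((Ordinal.ToType.mk (o := t.len)) ⟨j, hj⟩)
    simpa [hg] using h2
  set s' : Set Ordinal := s ∪ α '' Set.Iio t.len with hs'
  set A' : Set Ordinal := A ∩ Set.Ioi (iSup g) with hA'
  have hnewA : ∀ j < t.len, α j ∈ A := fun j hj => (spec j (lt_trans hj hlen)).1
  have hκord : Cardinal.aleph0 ≤ Cardinal.lift.{1} κ := by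
    rw [← Cardinal.lift_aleph0.{1,0}]; exact Cardinal.lift_le.2 hreg.aleph0_le
  refine ⟨s', A', ⟨?_, ?_, club_inter_Ioi hclub hβ, ?_⟩, ⟨Set.subset_union_left, ?_, 
    Set.inter_subset_left, ?_⟩, ?_⟩
  · rintro x (hx | ⟨j, hj, rfl⟩)
    · exact hsub hx
    · exact hclub.1 (hnewA j hj)
  · refine lt_of_le_of_lt (Cardinal.mk_union_le _ _) (Cardinal.add_lt_of_lt hκord hcard ?_)
    refine lt_of_le_of_lt Cardinal.mk_image_le ?_
    rw [Ordinal.mk_Iio_ordinal]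
    exact Cardinal.lift_lt.2 (Cardinal.lt_ord.mp hlen)
  · rintro a (ha | ⟨j, hj, rfl⟩) b hb
    · exact hlt a ha b hb.1
    · exact lt_of_le_of_lt (hαβ j hj) hb.2
  · rintro a (ha | ⟨j, hj, rfl⟩) hns b hb
    · exact absurd ha hns
    · exact hlt b hb _ (hnewA j hj)
  · intro x hx
    rcases hx.1 with hxs | ⟨j, hj, rfl⟩
    · exact absurd hxs hx.2
    · exact hnewA j hj
  -- the enumeration
  · set e : Ordinal → Ordinal := fun i => if i < d0 then e0 i else α (i - d0) with he
    have he1 : ∀ i < d0, e i = e0 i := fun i hi => by simp [he, hi]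
    have he2 : ∀ j, e (d0 + j) = α j := fun j => by
      have h : ¬ d0 + j < d0 := not_lt.2 ((le_self_add : d0 ≤ d0 + j))
      simp [he, h, Ordinal.add_sub_cancel]
    have hspec' : ∀ j < t.len, α j ∈ A ∧ (∀ i < j, α i < α j) ∧ (α j ∈ S ↔ f j = false) :=
      fun j hj => spec j (lt_trans hj hlen)
    refine ⟨e, ⟨?_, ?_, ?_⟩, he1, ?_⟩
    · intro i hi
      by_cases hid : i < d0
      · rw [he1 i hid]; exact Or.inl (he0.1 i hid)
      · push_neg at hid
        have hieq : d0 + (i - d0) = i := Ordinal.add_sub_cancel_of_le hid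
        have hjlt : i - d0 < t.len := by
          rw [← add_lt_add_iff_left d0, hieq]; exact hi
        have : e i = α (i - d0) := by rw [← hieq, he2]; rw [hieq]
        rw [this]
        exact Or.inr ⟨i - d0, hjlt, rfl⟩
    · rintro a (ha | ⟨j, hj, rfl⟩)
      · obtain ⟨i, hi, hia⟩ := he0.2.1 a ha
        exact ⟨i, lt_of_lt_of_le hi ((le_self_add : d0 ≤ d0 + t.len)), by rw [he1 i hi]; exact hia⟩
      · exact ⟨d0 + j, (add_lt_add_iff_left d0).2 hj, he2 j⟩
    · intro i j hij hj
      by_cases hid : i < d0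
      · by_cases hjd : j < d0
        · rw [he1 i hid, he1 j hjd]; exact he0.2.2 i j hij hjd
        · push_neg at hjd
          have hjeq : d0 + (j - d0) = j := Ordinal.add_sub_cancel_of_le hjd
          have hjlt : j - d0 < t.len := by
            rw [← add_lt_add_iff_left d0, hjeq]; exact hj
          have hej : e j = α (j - d0) := by rw [← hjeq, he2]; rw [hjeq]
          rw [he1 i hid, hej]
          exact hlt _ (he0.1 i hid) _ (hnewA _ hjlt)
      · push_neg at hid
        have hjd : d0 ≤ j := le_trans hid (le_of_lt hij)
        have hieq : d0 + (i - d0) = i := Ordinal.add_sub_cancel_of_le hid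
        have hjeq : d0 + (j - d0) = j := Ordinal.add_sub_cancel_of_le hjd
        have hjlt : j - d0 < t.len := by
          rw [← add_lt_add_iff_left d0, hjeq]; exact hj
        have hijlt : i - d0 < j - d0 := by
          rw [← add_lt_add_iff_left d0, hieq, hjeq]; exact hij
        have hei : e i = α (i - d0) := by rw [← hieq, he2]; rw [hieq]
        have hej : e j = α (j - d0) := by rw [← hjeq, he2]; rw [hjeq]
        rw [hei, hej]
        exact (hspec' _ hjlt).2.1 _ hijlt
    · intro j hj
      rw [he2 j]
      exact ((hspec' j hj).2.2).symm
end
end
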